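/- Let V be a finite-dimensional normed space, D a balanced cone spanning V, and f : B(x₀, 2r) → ℝ a D-convex function. For all x, y ∈ B(x₀, r) with x − y ∈ D, it holds that |f(x) − f(y)| ≤ (m/r)·‖x − y‖, where m = osc(f, B(x₀, 2r)) = sup f − inf f over B(x₀,2r). -/

import Mathlib

open Set Metric

/-- D-convexity of a real-valued function on a set `S`. -/
def DConvexOn {V : Type*} [NormedAddCommGroup V] [NormedSpace ℝ V]
    (D S : Set V) (f : V → ℝ) : Prop :=
  ∀ ⦃x y : V⦄, x ∈ S → y ∈ S → x - y ∈ D → segment ℝ x y ⊆ S →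
    ConvexOn ℝ (segment ℝ x y) f

/-- Step 2 of the Lipschitz estimate: for a D-convex function on
`B(x₀,2r)` and points `x, y ∈ B(x₀,r)` with `x − y ∈ D`, one has
`|f(x) − f(y)| ≤ (m/r)‖x − y‖` where `m` bounds the oscillation on `B(x₀,2r)`. -/
lemma dconvex_aux {V : Type*} [NormedAddCommGroup V] [NormedSpace ℝ V]
    (D : Set V) (hDbal : ∀ (t : ℝ), ∀ x ∈ D, t • x ∈ D)
    (x₀ : V) (r : ℝ) (hr : 0 < r)
    (f : V → ℝ) (hf : DConvexOn D (ball x₀ (2 * r)) f)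
    (m : ℝ) (hm : ∀ u ∈ ball x₀ (2 * r), ∀ v ∈ ball x₀ (2 * r), f u - f v ≤ m)
    (x y : V) (hx : x ∈ ball x₀ r) (hy : y ∈ ball x₀ r) (hxy : x - y ∈ D) :
    f x - f y ≤ m / r * ‖x - y‖ := by
  have hx0 : x₀ ∈ ball x₀ (2 * r) := mem_ball_self (by linarith)
  have hm0 : 0 ≤ m := by have := hm x₀ hx0 x₀ hx0; linarith
  by_cases hxy0 : x = y
  · simp [hxy0]
  have hd : 0 < ‖x - y‖ := by
    simpa [sub_eq_zero] using hxy0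
  set d : ℝ := ‖x - y‖ with hddef
  set e : V := d⁻¹ • (x - y) with hedef
  have he : ‖e‖ = 1 := by
    rw [hedef, norm_smul, Real.norm_eq_abs, abs_of_pos (inv_pos.mpr hd)]
    field_simp
    exact hddef.symm
  set x' : V := x + r • e with hx'def
  have hball : ball x₀ r ⊆ ball x₀ (2 * r) := ball_subset_ball (by linarith)
  have hx2 : x ∈ ball x₀ (2 * r) := hball hx
  have hy2 : y ∈ ball x₀ (2 * r) := hball hy
  have hx' : x' ∈ ball x₀ (2 * r) := by
    rw [mem_ball, dist_eq_norm]
    have : x' - x₀ = (x - x₀) + r • e := by rw [hx'def]; abel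
    rw [this]
    calc ‖(x - x₀) + r • e‖ ≤ ‖x - x₀‖ + ‖r • e‖ := norm_add_le _ _
    _ < r + r := by
        rw [norm_smul, he, Real.norm_eq_abs, abs_of_pos hr]
        have : ‖x - x₀‖ < r := by rw [← dist_eq_norm]; exact hx
        linarith
    _ = 2 * r := by ring
  have hdr : 0 < d + r := by linarith
  have hdir : x' - y ∈ D := by
    have heq : x' - y = (1 + r * d⁻¹) • (x - y) := by
      rw [hx'def, hedef]; module
    rw [heq]; exact hDbal _ _ hxy
  have hseg : segment ℝ x' y ⊆ ball x₀ (2 * r) :=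
    (convex_ball x₀ (2 * r)).segment_subset hx' hy2
  have hconv := hf hx' hy2 hdir hseg
  set t : ℝ := d / (d + r) with htdef
  have ht0 : 0 ≤ t := div_nonneg hd.le hdr.le
  have ht1 : 0 ≤ 1 - t := by
    rw [htdef, sub_nonneg]
    exact div_le_one_of_le₀ (by linarith) hdr.le
  have hts : t + t * (r * d⁻¹) = 1 := by
    rw [htdef]; field_simp
  have hx_eq : x = t • x' + (1 - t) • y := by
    have h1 : t • x' + (1 - t) • y = (t + t * (r * d⁻¹)) • (x - y) + y := by
      rw [hx'def, hedef]; module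
    rw [h1, hts, one_smul]; abel
  have hfx := hconv.2 (left_mem_segment ℝ x' y) (right_mem_segment ℝ x' y) ht0 ht1
    (by ring)
  rw [← hx_eq] at hfx
  simp only [smul_eq_mul] at hfx
  have hfm : f x' - f y ≤ m := hm x' hx' y hy2
  have h2 : f x - f y ≤ t * m := by nlinarith [mul_le_mul_of_nonneg_left hfm ht0]
  have h3 : t * m ≤ m / r * d := by
    rw [htdef, div_mul_eq_mul_div, div_mul_eq_mul_div, div_le_div_iff₀ hdr hr]
    nlinarith [mul_nonneg (mul_nonneg hm0 hd.le) hd.le]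
  linarith


theorem dconvex_difference_quotient_in_directions
    {V : Type*} [NormedAddCommGroup V] [NormedSpace ℝ V] [FiniteDimensional ℝ V]
    (D : Set V) (hDbal : ∀ (t : ℝ), ∀ x ∈ D, t • x ∈ D)
    (hDspan : Submodule.span ℝ D = ⊤)
    (x₀ : V) (r : ℝ) (hr : 0 < r)
    (f : V → ℝ) (hf : DConvexOn D (ball x₀ (2 * r)) f)
    (m : ℝ) (hm : ∀ u ∈ ball x₀ (2 * r), ∀ v ∈ ball x₀ (2 * r), f u - f v ≤ m)
    (x y : V) (hx : x ∈ ball x₀ r) (hy : y ∈ ball x₀ r) (hxy : x - y ∈ D) :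
    |f x - f y| ≤ m / r * ‖x - y‖ := by
  rw [abs_sub_le_iff]
  constructor
  · exact dconvex_aux D hDbal x₀ r hr f hf m hm x y hx hy hxy
  · have hyx : y - x ∈ D := by
      have := hDbal (-1) _ hxy
      simpa using this
    have := dconvex_aux D hDbal x₀ r hr f hf m hm y x hy hx hyx
    rwa [norm_sub_rev] at this
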